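/- Let D be a finite set and ν : Finset D → ℝ a cooperative game with Möbius transform m(S) := Σ_{T ⊆ S} (-1)^{|S|-|T|} ν(T). Then for every S ⊆ D, the Co-Möbius transform (full interaction effect) satisfies Δ_S(D ∖ S) := Σ_{L ⊆ S} (-1)^{|S|-|L|} ν((D ∖ S) ∪ L) = Σ_{T : S ⊆ T ⊆ D} m(T). (Theorem 4, full interaction effect row of Table 2.) -/
import Mathlib

open Finset

lemma sum_neg_one_pow_card_real {α : Type*} [DecidableEq α] (x : Finset α) :
    (∑ m ∈ x.powerset, (-1 : ℝ) ^ m.card) = if x = ∅ then 1 else 0 := by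
  have := Finset.sum_powerset_neg_one_pow_card (x := x)
  have h : ((∑ m ∈ x.powerset, (-1 : ℤ) ^ m.card : ℤ) : ℝ)
      = ∑ m ∈ x.powerset, (-1 : ℝ) ^ m.card := by push_cast; ring_nf
  rw [← h, this]
  split <;> simp

/-- Theorem 4, full interaction effect: the Co-Möbius transform
`Δ_S(D∖S) = Σ_{L ⊆ S} (-1)^{|S|-|L|} ν((D∖S) ∪ L)` equals `Σ_{T : S ⊆ T ⊆ D} m(T)`. -/
theorem comoebius_eq_sum_superset_moebius {α : Type*} [DecidableEq α] [Fintype α]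
    (ν m : Finset α → ℝ)
    (hm : ∀ S : Finset α, m S = ∑ T ∈ S.powerset, (-1 : ℝ) ^ (S.card - T.card) * ν T)
    (S : Finset α) :
    ∑ L ∈ S.powerset, (-1 : ℝ) ^ (S.card - L.card) * ν ((Finset.univ \ S) ∪ L) =
      ∑ T ∈ (Finset.univ : Finset α).powerset.filter (fun T => S ⊆ T), m T := by
  classical
  simp only [hm]
  -- swap the double sum
  rw [Finset.sum_comm' (s' := fun U => (Finset.univ : Finset α).powerset.filter
        (fun T => S ∪ U ⊆ T)) (t' := (Finset.univ : Finset α).powerset)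
      (by
        intro T U
        simp only [mem_filter, mem_powerset, union_subset_iff]
        constructor
        · rintro ⟨⟨hT, hS⟩, hU⟩
          exact ⟨⟨hT, hS, hU⟩, hU.trans hT⟩
        · rintro ⟨⟨hT, hS, hU⟩, _⟩
          exact ⟨⟨hT, hS⟩, hU⟩)]
  -- compute inner sum
  have hinner : ∀ U ∈ (Finset.univ : Finset α).powerset,
      (∑ T ∈ (Finset.univ : Finset α).powerset.filter (fun T => S ∪ U ⊆ T),
        (-1 : ℝ) ^ (T.card - U.card) * ν U)
      = if Finset.univ \ S ⊆ U then (-1 : ℝ) ^ ((Finset.univ : Finset α).card - U.card) * ν U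
        else 0 := by
    intro U _
    have hre : ∑ T ∈ (Finset.univ : Finset α).powerset.filter (fun T => S ∪ U ⊆ T),
        (-1 : ℝ) ^ (T.card - U.card) * ν U
        = ∑ e ∈ (Finset.univ \ (S ∪ U)).powerset,
            (-1 : ℝ) ^ (((S ∪ U) ∪ e).card - U.card) * ν U := by
      refine (Finset.sum_nbij' (fun e => (S ∪ U) ∪ e) (fun T => T \ (S ∪ U)) ?_ ?_ ?_ ?_ ?_).symm
      · intro e he
        simp only [mem_powerset] at he
        simp only [mem_filter, mem_powerset]
        exact ⟨Finset.subset_univ _, Finset.subset_union_left⟩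
      · intro T hT
        simp only [mem_filter, mem_powerset] at hT ⊢
        exact sdiff_subset_sdiff hT.1 (Finset.Subset.refl _)
      · intro e he
        simp only [mem_powerset] at he
        exact Finset.union_sdiff_cancel_left (Finset.disjoint_sdiff.mono_right he |>.symm.symm)
      · intro T hT
        simp only [mem_filter, mem_powerset] at hT
        exact Finset.union_sdiff_of_subset hT.2
      · intro e he; rfl
    rw [hre]
    have hdisj : ∀ e ∈ (Finset.univ \ (S ∪ U)).powerset, Disjoint (S ∪ U) e := by
      intro e he
      simp only [mem_powerset] at he
      exact (Finset.disjoint_sdiff).mono_right he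
    have hcard : ∀ e ∈ (Finset.univ \ (S ∪ U)).powerset,
        ((S ∪ U) ∪ e).card - U.card = ((S ∪ U).card - U.card) + e.card := by
      intro e he
      rw [Finset.card_union_of_disjoint (hdisj e he)]
      have h1 : U.card ≤ (S ∪ U).card := Finset.card_le_card Finset.subset_union_right
      omega
    calc ∑ e ∈ (Finset.univ \ (S ∪ U)).powerset,
          (-1 : ℝ) ^ (((S ∪ U) ∪ e).card - U.card) * ν U
        = ∑ e ∈ (Finset.univ \ (S ∪ U)).powerset,
            ((-1 : ℝ) ^ ((S ∪ U).card - U.card) * ν U) * (-1 : ℝ) ^ e.card := by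
          refine Finset.sum_congr rfl fun e he => ?_
          rw [hcard e he, pow_add]; ring
      _ = ((-1 : ℝ) ^ ((S ∪ U).card - U.card) * ν U) *
            ∑ e ∈ (Finset.univ \ (S ∪ U)).powerset, (-1 : ℝ) ^ e.card := by
          rw [Finset.mul_sum]
      _ = _ := by
          rw [sum_neg_one_pow_card_real]
          by_cases h : Finset.univ \ S ⊆ U
          · have hun : S ∪ U = Finset.univ := by
              apply Finset.eq_univ_of_forall
              intro x
              by_cases hx : x ∈ S
              · exact Finset.mem_union_left _ hx
              · exact Finset.mem_union_right _ (h (by simp [hx]))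
            rw [if_pos h, hun, if_pos (by simp)]
            ring
          · have hne : Finset.univ \ (S ∪ U) ≠ ∅ := by
              intro hc
              apply h
              intro x hx
              simp only [mem_sdiff, mem_univ, true_and] at hx
              by_contra hxu
              have : x ∈ Finset.univ \ (S ∪ U) := by simp [hx, hxu]
              simp [hc] at this
            rw [if_neg hne, if_neg h]
            ring
  rw [Finset.sum_congr rfl hinner, ← Finset.sum_filter]
  -- now reindex LHS
  refine Finset.sum_nbij' (fun L => (Finset.univ \ S) ∪ L) (fun U => U ∩ S) ?_ ?_ ?_ ?_ ?_
  · intro L hL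
    simp only [mem_powerset] at hL
    simp only [mem_filter, mem_powerset]
    exact ⟨Finset.subset_univ _, Finset.subset_union_left⟩
  · intro U hU
    simp only [mem_powerset]
    exact Finset.inter_subset_right
  · intro L hL
    simp only [mem_powerset] at hL
    ext x
    simp only [mem_inter, mem_union, mem_sdiff, mem_univ, true_and]
    constructor
    · rintro ⟨h1 | h1, h2⟩
      · exact absurd h2 h1
      · exact h1
    · intro hx; exact ⟨Or.inr hx, hL hx⟩
  · intro U hU
    simp only [mem_filter, mem_powerset] at hU
    ext x
    simp only [mem_union, mem_sdiff, mem_univ, true_and, mem_inter]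
    constructor
    · rintro (h | ⟨h1, _⟩)
      · exact hU.2 (by simp [h])
      · exact h1
    · intro hx
      by_cases hs : x ∈ S
      · exact Or.inr ⟨hx, hs⟩
      · exact Or.inl hs
  · intro L hL
    simp only [mem_powerset] at hL
    have hd : Disjoint (Finset.univ \ S) L := Finset.sdiff_disjoint.mono_right hL
    have hc : ((Finset.univ \ S) ∪ L).card = (Finset.univ : Finset α).card - S.card + L.card := by
      rw [Finset.card_union_of_disjoint hd, Finset.card_sdiff_of_subset (Finset.subset_univ _)]
    have h1 : L.card ≤ S.card := Finset.card_le_card hL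
    have h2 : S.card ≤ (Finset.univ : Finset α).card := Finset.card_le_card (Finset.subset_univ _)
    have hexp : S.card - L.card
        = (Finset.univ : Finset α).card - ((Finset.univ \ S) ∪ L).card := by
      rw [hc]; omega
    rw [hexp]
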